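/- Let n ≥ 2 and set ζ = e^{iπ/(2(2n−1))} ∈ ℂ. Then the set of complex roots of the polynomial w_n(x²) is exactly {ζ^{2j−1} + ζ^{−(2j−1)} : j ∈ {1, …, 2n−1}, j ≠ n}, and these 2n−2 complex numbers are pairwise distinct. -/

import Mathlib

open Polynomial

/-- The recurrence sequence `w₀ = 1`, `w₁ = 1`, `wₙ = (x−2)·wₙ₋₁ − wₙ₋₂`. -/
noncomputable def w : ℕ → Polynomial ℤ
  | 0 => 1
  | 1 => 1
  | n + 2 => (X - C 2) * w (n + 1) - w n

lemma w_key (t : ℂ) (ht : t ≠ 0) : ∀ n : ℕ,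
    t ^ (2*n+1) * (t + t⁻¹) * (aeval ((t + t⁻¹)^2) (w n)) = t ^ (4*n) + t ^ 2 := by
  intro n
  induction n using Nat.twoStepInduction with
  | zero => simp [w]; field_simp; ring
  | one => simp [w]; field_simp
  | more n ih1 ih2 =>
    have hw : w (n+2) = (X - C 2) * w (n+1) - w n := rfl
    rw [hw]
    simp only [map_sub, map_mul, aeval_X, aeval_C, map_ofNat]
    have key : t ^ (2*(n+2)+1) * (t + t⁻¹) * (((t+t⁻¹)^2 - 2) * (aeval ((t + t⁻¹)^2) (w (n+1))) - (aeval ((t + t⁻¹)^2) (w n)))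
        = ((t+t⁻¹)^2 - 2) * t^2 * (t^(2*(n+1)+1) * (t+t⁻¹) * (aeval ((t + t⁻¹)^2) (w (n+1))))
          - t^4 * (t^(2*n+1) * (t+t⁻¹) * (aeval ((t + t⁻¹)^2) (w n))) := by ring
    rw [key, ih2, ih1]
    field_simp
    ring

lemma w_zero (n : ℕ) : aeval (0:ℂ) (w n) = (-1)^(n+1) * (2*n - 1) := by
  induction n using Nat.twoStepInduction with
  | zero => simp [w]
  | one => simp [w]; ring
  | more n ih1 ih2 =>
    have hw : w (n+2) = (X - C 2) * w (n+1) - w n := rfl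
    rw [hw]
    simp only [map_sub, map_mul, aeval_X, aeval_C, map_ofNat] at *
    rw [ih1, ih2]; push_cast; ring

/-- For `n ≥ 2` and `ζ = e^{iπ/(2(2n−1))}`, the set of complex roots of `wₙ(x²)` is exactly
`{ζ^(2j−1) + ζ^(−(2j−1)) : j ∈ {1, …, 2n−1}, j ≠ n}`, and these `2n−2` numbers are
pairwise distinct. -/
theorem stmt_14 (n : ℕ) (hn : 2 ≤ n) (ζ : ℂ)
    (hζ : ζ = Complex.exp (Real.pi * Complex.I / (2 * ((2 * n - 1 : ℕ) : ℂ)))) :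
    (∀ z : ℂ, (Polynomial.aeval z) ((w n).comp (X ^ 2)) = 0 ↔
      ∃ j : ℕ, 1 ≤ j ∧ j ≤ 2 * n - 1 ∧ j ≠ n ∧
        z = ζ ^ (2 * j - 1) + (ζ ^ (2 * j - 1))⁻¹) ∧
    (∀ j₁ j₂ : ℕ, 1 ≤ j₁ → j₁ ≤ 2 * n - 1 → j₁ ≠ n → 1 ≤ j₂ → j₂ ≤ 2 * n - 1 → j₂ ≠ n →
      ζ ^ (2 * j₁ - 1) + (ζ ^ (2 * j₁ - 1))⁻¹ = ζ ^ (2 * j₂ - 1) + (ζ ^ (2 * j₂ - 1))⁻¹ →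
      j₁ = j₂) := by
  have hm0 : (2*n-1 : ℕ) ≠ 0 := by omega
  have hmC : ((2*n-1:ℕ):ℂ) ≠ 0 := Nat.cast_ne_zero.mpr hm0
  have hmR : ((2*n-1:ℕ):ℝ) ≠ 0 := Nat.cast_ne_zero.mpr hm0
  have hmRpos : (0:ℝ) < ((2*n-1:ℕ):ℝ) := Nat.cast_pos.mpr (by omega)
  have hζ0 : ζ ≠ 0 := by rw [hζ]; exact Complex.exp_ne_zero _
  -- cosine representation
  have hcos : ∀ e : ℕ, ζ^e + (ζ^e)⁻¹
      = ((2 * Real.cos ((e:ℝ) * Real.pi / (2*((2*n-1:ℕ):ℝ))) : ℝ) : ℂ) := by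
    intro e
    rw [hζ, ← Complex.exp_nat_mul, ← Complex.exp_neg]
    have h : (e:ℂ) * (Real.pi * Complex.I / (2*((2*n-1:ℕ):ℂ)))
        = (((e:ℝ) * Real.pi / (2*((2*n-1:ℕ):ℝ)) : ℝ) : ℂ) * Complex.I := by
      push_cast
      field_simp
    rw [h, ← neg_mul, ← Complex.two_cos, ← Complex.ofReal_cos]
    push_cast
    ring
  -- z_j is nonzero for admissible j
  have hne0 : ∀ j : ℕ, 1 ≤ j → j ≤ 2*n-1 → j ≠ n → ζ^(2*j-1) + (ζ^(2*j-1))⁻¹ ≠ 0 := by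
    intro j h1 h2 h3 h
    rw [hcos] at h
    have hc : Real.cos (((2*j-1:ℕ):ℝ) * Real.pi / (2*((2*n-1:ℕ):ℝ))) = 0 := by
      have := Complex.ofReal_eq_zero.mp h
      linarith [this]  -- 2 * cos = 0
    rw [Real.cos_eq_zero_iff] at hc
    obtain ⟨k, hk⟩ := hc
    have hπ : Real.pi ≠ 0 := Real.pi_ne_zero
    have h2 : ((2*j-1:ℕ):ℝ) * 2 = (2*(k:ℝ)+1) * (2*((2*n-1:ℕ):ℝ)) := by
      apply mul_right_cancel₀ Real.pi_ne_zero
      rw [div_eq_div_iff (by positivity) (by norm_num)] at hk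
      linear_combination hk
    have h3' : ((2*j-1:ℕ):ℤ) * 2 = (2*k+1) * (2*((2*n-1:ℕ):ℤ)) := by exact_mod_cast h2
    have hM : (3:ℤ) ≤ ((2*n-1:ℕ):ℤ) := by omega
    have ha1 : (1:ℤ) ≤ ((2*j-1:ℕ):ℤ) := by omega
    have ha2 : ((2*j-1:ℕ):ℤ) + 1 ≤ 2*((2*n-1:ℕ):ℤ) := by omega
    have hk1 : k ≤ 0 := by
      by_contra hc
      push_neg at hc
      have h5 : (3:ℤ) ≤ 2*k+1 := by omega
      have h6 : (3:ℤ)*(2*((2*n-1:ℕ):ℤ)) ≤ (2*k+1) * (2*((2*n-1:ℕ):ℤ)) :=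
        mul_le_mul_of_nonneg_right h5 (by omega)
      linarith
    have hk2 : 0 ≤ k := by
      by_contra hc
      push_neg at hc
      have h5 : (2*k+1 : ℤ) ≤ -1 := by omega
      have h6 : (2*k+1) * (2*((2*n-1:ℕ):ℤ)) ≤ (-1)*(2*((2*n-1:ℕ):ℤ)) :=
        mul_le_mul_of_nonneg_right h5 (by omega)
      linarith
    have hk0 : k = 0 := le_antisymm hk1 hk2
    rw [hk0] at h3'
    omega
  -- primitive root facts
  have hprim : IsPrimitiveRoot ζ (4*(2*n-1)) := by
    have h := Complex.isPrimitiveRoot_exp (4*(2*n-1)) (by omega)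
    have he : Complex.exp (2 * Real.pi * Complex.I / ((4*(2*n-1):ℕ):ℂ)) = ζ := by
      rw [hζ]
      congr 1
      rw [show ((4*(2*n-1):ℕ):ℂ) = 2*(2*((2*n-1:ℕ):ℂ)) from by push_cast; ring,
        show (2:ℂ) * Real.pi * Complex.I = 2 * (Real.pi * Complex.I) from by ring,
        mul_div_mul_left _ _ (two_ne_zero)]
    rwa [he] at h
  have h4m1 : ζ^(4*(2*n-1)) = 1 := hprim.pow_eq_one
  have hζ2m : ζ^(2*(2*n-1)) = -1 := by
    rw [hζ, ← Complex.exp_nat_mul, ← Complex.exp_pi_mul_I]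
    congr 1
    rw [show ((2*(2*n-1):ℕ):ℂ) = 2*((2*n-1:ℕ):ℂ) from by push_cast; ring,
      mul_comm, div_mul_cancel₀ _ (mul_ne_zero two_ne_zero hmC)]
  have hzmid : ζ^(2*n-1) + (ζ^(2*n-1))⁻¹ = 0 := by
    rw [hcos, show ((2*n-1:ℕ):ℝ) * Real.pi / (2*((2*n-1:ℕ):ℝ)) = Real.pi/2 from
      (div_eq_div_iff (by positivity) (by norm_num)).mpr (by ring), Real.cos_pi_div_two]
    norm_num
  -- main root characterization
  constructor
  · intro z
    have hcomp : (Polynomial.aeval z) ((w n).comp (X ^ 2)) = aeval (z^2) (w n) := by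
      simp [aeval_comp]
    rw [hcomp]
    by_cases hz : z = 0
    · subst hz
      constructor
      · intro h
        exfalso
        rw [show ((0:ℂ)^2) = 0 by ring, w_zero] at h
        have h1 : (2*(n:ℂ) - 1) ≠ 0 := by
          have : (2*(n:ℂ) - 1) = ((2*n-1:ℕ):ℂ) := by
            push_cast [Nat.cast_sub (by omega : 1 ≤ 2*n)]
            ring
          rw [this]; exact hmC
        have h2 : ((-1:ℂ))^(n+1) ≠ 0 := by
          apply pow_ne_zero; norm_num
        exact (mul_ne_zero h2 h1) h
      · rintro ⟨j, h1, h2, h3, hzj⟩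
        exact absurd hzj.symm (hne0 j h1 h2 h3)
    · constructor
      · intro hA
        obtain ⟨s, hs⟩ := IsAlgClosed.exists_pow_nat_eq (z^2 - 4) (two_pos)
        set t := (z + s)/2 with htdef
        have ht : t ≠ 0 := by
          intro h
          have hz0 : z + s = 0 := by
            rw [htdef, div_eq_zero_iff] at h
            exact h.resolve_right two_ne_zero
          have h4 : (4:ℂ) = 0 := by linear_combination (z - s) * hz0 + hs
          norm_num at h4
        have hinv : t⁻¹ = z - t := by
          refine inv_eq_of_mul_eq_one_right ?_
          rw [htdef]
          field_simp
          linear_combination -hs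
        have htz : t + t⁻¹ = z := by rw [hinv]; ring
        have hkey := w_key t ht n
        rw [htz, hA, mul_zero] at hkey
        have h2m : t^(2*(2*n-1)) = -1 := by
          have e1 : t^(4*n) = t^(2*(2*n-1)) * t^2 := by
            rw [← pow_add]; congr 1; omega
          have h3 : t^2 * (t^(2*(2*n-1)) + 1) = 0 := by
            linear_combination -e1 - hkey
          rcases mul_eq_zero.mp h3 with h4 | h4
          · exact absurd h4 (pow_ne_zero _ ht)
          · linear_combination h4
        have h4m : t^(4*(2*n-1)) = 1 := by
          rw [show 4*(2*n-1) = 2*(2*n-1)*2 by ring, pow_mul, h2m]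
          norm_num
        have : NeZero (4*(2*n-1)) := ⟨by omega⟩
        obtain ⟨i, hi, hti⟩ := hprim.eq_pow_of_pow_eq_one h4m
        have hoddi : Odd i := by
          by_contra hev
          rw [Nat.not_odd_iff_even] at hev
          have h5 : t^(2*(2*n-1)) = 1 := by
            rw [← hti, ← pow_mul, mul_comm, pow_mul, hζ2m]
            exact hev.neg_one_pow
          rw [h2m] at h5
          norm_num at h5
        have hz_eq : z = ζ^i + (ζ^i)⁻¹ := by rw [hti, ← htz]
        obtain ⟨a, ha⟩ := hoddi
        by_cases hcmp : i < 2*(2*n-1)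
        · refine ⟨a+1, by omega, by omega, ?_, ?_⟩
          · intro hc
            apply hz
            have hieq : i = 2*n-1 := by omega
            rw [hz_eq, hieq]
            exact hzmid
          · rw [hz_eq, show 2*(a+1)-1 = i by omega]
        · have hii' : i + (4*(2*n-1) - i) = 4*(2*n-1) := by omega
          set i' := 4*(2*n-1) - i with hi'def
          have hzinv : ζ^i * ζ^i' = 1 := by rw [← pow_add, hii', h4m1]
          have hswap : (ζ^i)⁻¹ = ζ^i' := inv_eq_of_mul_eq_one_right hzinv
          have hswap2 : (ζ^i')⁻¹ = ζ^i := inv_eq_of_mul_eq_one_left hzinv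
          obtain ⟨a', ha'⟩ : ∃ a', i' = 2*a'+1 := ⟨(i'-1)/2, by omega⟩
          refine ⟨a'+1, by omega, by omega, ?_, ?_⟩
          · intro hc
            apply hz
            have hieq : i' = 2*n-1 := by omega
            rw [hz_eq, hswap, ← hswap2, hieq, add_comm]
            exact hzmid
          · rw [hz_eq, hswap, ← hswap2, show 2*(a'+1)-1 = i' by omega]
            ring
      · rintro ⟨j, h1, h2, h3, hzj⟩
        have ht : ζ^(2*j-1) ≠ 0 := pow_ne_zero _ hζ0
        have hkey := w_key (ζ^(2*j-1)) ht n
        rw [← hzj] at hkey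
        have hodd : Odd (2*j-1) := ⟨j-1, by omega⟩
        have hpow : (ζ^(2*j-1))^(2*(2*n-1)) = -1 := by
          rw [← pow_mul, mul_comm, pow_mul, hζ2m]
          exact hodd.neg_one_pow
        have hrhs : (ζ^(2*j-1))^(4*n) + (ζ^(2*j-1))^2 = 0 := by
          have e1 : (ζ^(2*j-1))^(4*n) = (ζ^(2*j-1))^(2*(2*n-1)) * (ζ^(2*j-1))^2 := by
            rw [← pow_add]; congr 1; omega
          rw [e1, hpow]; ring
        rw [hrhs] at hkey
        rcases mul_eq_zero.mp hkey with h4 | h4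
        · exact absurd h4 (mul_ne_zero (pow_ne_zero _ ht) hz)
        · exact h4
  · intro j₁ j₂ h11 h12 h13 h21 h22 h23 heq
    rw [hcos, hcos] at heq
    have heqR := Complex.ofReal_inj.mp heq
    have hcc : Real.cos (((2*j₁-1:ℕ):ℝ) * Real.pi / (2*((2*n-1:ℕ):ℝ)))
        = Real.cos (((2*j₂-1:ℕ):ℝ) * Real.pi / (2*((2*n-1:ℕ):ℝ))) := by linarith
    have hmem : ∀ j : ℕ, 1 ≤ j → j ≤ 2*n-1 →
        ((2*j-1:ℕ):ℝ) * Real.pi / (2*((2*n-1:ℕ):ℝ)) ∈ Set.Icc 0 Real.pi := by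
      intro j hj1 hj2
      constructor
      · positivity
      · rw [div_le_iff₀ (by positivity)]
        have hle : ((2*j-1:ℕ):ℝ) ≤ 2*((2*n-1:ℕ):ℝ) := by
          exact_mod_cast (by omega : (2*j-1:ℕ) ≤ 2*(2*n-1))
        nlinarith [Real.pi_pos]
    have := Real.injOn_cos (hmem j₁ h11 h12) (hmem j₂ h21 h22) hcc
    have hπ : Real.pi ≠ 0 := Real.pi_ne_zero
    have hj : ((2*j₁-1:ℕ):ℝ) * Real.pi / (2*((2*n-1:ℕ):ℝ)) * (2*((2*n-1:ℕ):ℝ))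
        = ((2*j₂-1:ℕ):ℝ) * Real.pi / (2*((2*n-1:ℕ):ℝ)) * (2*((2*n-1:ℕ):ℝ)) := by
      rw [this]
    rw [div_mul_cancel₀ _ (by positivity), div_mul_cancel₀ _ (by positivity)] at hj
    have hj2 : ((2*j₁-1:ℕ):ℝ) = ((2*j₂-1:ℕ):ℝ) := mul_right_cancel₀ hπ hj
    have : (2*j₁-1:ℕ) = (2*j₂-1:ℕ) := by exact_mod_cast hj2
    omega
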